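/- A monomial x_1^{d_1}⋯x_n^{d_n} in F_2[x_1,…,x_n] of total degree d with exactly r odd exponents d_i is hit (lies in the image of the positive-degree Steenrod operations) whenever α(d + r) > r, where α(m) denotes the number of 1's in the binary expansion of m. -/

import Mathlib

open MvPolynomial

/-- The action of the mod-2 Steenrod squares on F₂[x₁,…,xₙ]: F₂-linear operations
Sq i with Sq 0 = id, Sq 1 xᵢ = xᵢ², Sq k xᵢ = 0 for k ≥ 2, and the Cartan formula.
These properties determine the action uniquely. -/
structure SteenrodAction (n : ℕ) where
  Sq : ℕ → MvPolynomial (Fin n) (ZMod 2) →ₗ[ZMod 2] MvPolynomial (Fin n) (ZMod 2)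
  sq_zero : ∀ p, Sq 0 p = p
  sq_one_var : ∀ i, Sq 1 (X i) = X i ^ 2
  sq_var_eq_zero : ∀ i k, 2 ≤ k → Sq k (X i) = 0
  cartan : ∀ k u v, Sq k (u * v) = ∑ ij ∈ Finset.HasAntidiagonal.antidiagonal k, Sq ij.1 u * Sq ij.2 v

/-- `p` is hit: it lies in the span of the images of the positive-degree Steenrod operations. -/
def SteenrodAction.IsHit {n : ℕ} (A : SteenrodAction n)
    (p : MvPolynomial (Fin n) (ZMod 2)) : Prop :=
  p ∈ Submodule.span (ZMod 2) {q | ∃ i, 0 < i ∧ ∃ u, q = A.Sq i u}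

section Shuffles
open Finset
variable {M : Type*} [AddCommMonoid M]

/-- Shuffle of a triple antidiagonal sum: `(p+q)+j = (p+j)+q`. -/
lemma sh1 (k : ℕ) (f : ℕ → ℕ → ℕ → M) :
    ∑ x ∈ antidiagonal k, ∑ y ∈ antidiagonal x.1, f y.1 x.2 y.2 =
    ∑ x ∈ antidiagonal k, ∑ y ∈ antidiagonal x.1, f y.1 y.2 x.2 := by
  rw [Finset.sum_sigma', Finset.sum_sigma']
  refine Finset.sum_nbij' (fun z => ⟨(z.2.1 + z.1.2, z.2.2), (z.2.1, z.1.2)⟩)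
    (fun z => ⟨(z.2.1 + z.1.2, z.2.2), (z.2.1, z.1.2)⟩) ?_ ?_ ?_ ?_ ?_
  · rintro ⟨⟨a, b⟩, ⟨c, e⟩⟩ hz
    simp only [Finset.mem_sigma, Finset.HasAntidiagonal.mem_antidiagonal, and_true, true_and] at hz ⊢
    omega
  · rintro ⟨⟨a, b⟩, ⟨c, e⟩⟩ hz
    simp only [Finset.mem_sigma, Finset.HasAntidiagonal.mem_antidiagonal, and_true, true_and] at hz ⊢
    omega
  · rintro ⟨⟨a, b⟩, ⟨c, e⟩⟩ hz
    simp only [Finset.mem_sigma, Finset.HasAntidiagonal.mem_antidiagonal] at hz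
    obtain ⟨h1, h2⟩ := hz; subst h2; rfl
  · rintro ⟨⟨a, b⟩, ⟨c, e⟩⟩ hz
    simp only [Finset.mem_sigma, Finset.HasAntidiagonal.mem_antidiagonal] at hz
    obtain ⟨h1, h2⟩ := hz; subst h2; rfl
  · rintro ⟨⟨a, b⟩, ⟨c, e⟩⟩ hz; rfl

/-- Shuffle of a quadruple antidiagonal sum: `(s+t)+(p+q) = (s+p)+(t+q)`. -/
lemma sh2 (k : ℕ) (g : ℕ → ℕ → ℕ → ℕ → M) :
    ∑ x ∈ antidiagonal k, ∑ y ∈ antidiagonal x.2, ∑ z ∈ antidiagonal x.1, g z.1 y.1 z.2 y.2 =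
    ∑ x ∈ antidiagonal k, ∑ y ∈ antidiagonal x.1, ∑ z ∈ antidiagonal x.2, g y.1 y.2 z.1 z.2 := by
  rw [Finset.sum_sigma', Finset.sum_sigma', Finset.sum_sigma', Finset.sum_sigma']
  refine Finset.sum_nbij'
    (fun w => ⟨⟨(w.2.1 + w.1.2.1, w.2.2 + w.1.2.2), (w.2.1, w.1.2.1)⟩, (w.2.2, w.1.2.2)⟩)
    (fun w => ⟨⟨(w.1.2.1 + w.2.1, w.1.2.2 + w.2.2), (w.1.2.2, w.2.2)⟩, (w.1.2.1, w.2.1)⟩)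
    ?_ ?_ ?_ ?_ ?_
  · rintro ⟨⟨⟨a, b⟩, ⟨c, e⟩⟩, ⟨u, v⟩⟩ hz
    simp only [Finset.mem_sigma, Finset.HasAntidiagonal.mem_antidiagonal, and_true, true_and] at hz ⊢
    omega
  · rintro ⟨⟨⟨a, b⟩, ⟨c, e⟩⟩, ⟨u, v⟩⟩ hz
    simp only [Finset.mem_sigma, Finset.HasAntidiagonal.mem_antidiagonal, and_true, true_and] at hz ⊢
    omega
  · rintro ⟨⟨⟨a, b⟩, ⟨c, e⟩⟩, ⟨u, v⟩⟩ hz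
    simp only [Finset.mem_sigma, Finset.HasAntidiagonal.mem_antidiagonal] at hz
    obtain ⟨⟨h1, h2⟩, h3⟩ := hz; subst h2; subst h3; rfl
  · rintro ⟨⟨⟨a, b⟩, ⟨c, e⟩⟩, ⟨u, v⟩⟩ hz
    simp only [Finset.mem_sigma, Finset.HasAntidiagonal.mem_antidiagonal] at hz
    obtain ⟨⟨h1, h2⟩, h3⟩ := hz; subst h2; subst h3; rfl
  · rintro ⟨⟨⟨a, b⟩, ⟨c, e⟩⟩, ⟨u, v⟩⟩ hz; rfl

end Shuffles

namespace SteenrodAction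

variable {n : ℕ} (A : SteenrodAction n)

local notation "P" => MvPolynomial (Fin n) (ZMod 2)

lemma addSelf (x : P) : x + x = 0 := CharTwo.add_self_eq_zero x

/-- The conjugation operations χ(Sq^k). -/
noncomputable def chi : ℕ → P → P
  | 0 => fun p => p
  | (k+1) => fun p => ∑ i ∈ Finset.range (k+1), A.Sq (i+1) (chi (k - i) p)
  termination_by k => k
  decreasing_by omega

@[simp] lemma chi_zero (p : P) : A.chi 0 p = p := by rw [chi]

lemma chi_succ (k : ℕ) (p : P) :
    A.chi (k+1) p = ∑ x ∈ Finset.HasAntidiagonal.antidiagonal k, A.Sq (x.1+1) (A.chi x.2 p) := by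
  rw [Finset.Nat.sum_antidiagonal_eq_sum_range_succ (fun i j => A.Sq (i+1) (A.chi j p)), chi]

/-- Key cancellation: ∑_{i+j=k} Sq^i χ^j = δ_{k,0}. -/
lemma sum_sq_chi (k : ℕ) (p : P) :
    ∑ x ∈ Finset.HasAntidiagonal.antidiagonal k, A.Sq x.1 (A.chi x.2 p) = if k = 0 then p else 0 := by
  cases k with
  | zero => simp [A.sq_zero]
  | succ m =>
    rw [Finset.Nat.sum_antidiagonal_succ]
    simp only [A.sq_zero, Nat.succ_ne_zero, if_false]
    rw [← chi_succ, addSelf]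


lemma sq_one_pos : ∀ k, 0 < k → A.Sq k 1 = 0 := by
  intro k
  induction k using Nat.strong_induction_on with
  | _ k ih =>
    match k with
    | 0 => intro h; omega
    | (m+1) =>
      intro _
      have h : A.Sq (m+1) (1 * 1) = ∑ x ∈ Finset.HasAntidiagonal.antidiagonal (m+1),
          A.Sq x.1 1 * A.Sq x.2 1 := A.cartan (m+1) 1 1
      rw [one_mul, Finset.Nat.sum_antidiagonal_succ, A.sq_zero, one_mul] at h
      rw [Finset.sum_eq_single (m, 0)] at h
      · simp only [A.sq_zero, mul_one] at h
        rw [← CharTwo.add_self_eq_zero (A.Sq (m+1) 1)]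
        conv_lhs => rw [h]
      · rintro ⟨x1, x2⟩ hx hne
        simp only [Finset.HasAntidiagonal.mem_antidiagonal] at hx
        have hlt : x1 + 1 < m + 1 := by
          rcases Nat.lt_or_ge (x1+1) (m+1) with h'|h'
          · exact h'
          · exfalso; apply hne; have : x1 = m := by omega
            subst this; have : x2 = 0 := by omega
            subst this; rfl
        rw [ih (x1+1) hlt (by omega), zero_mul]
      · intro hmem
        exfalso; exact hmem (by simp [Finset.HasAntidiagonal.mem_antidiagonal])


/-- The χ-trick: `a·Sq^k(b) + χ^k(a)·b` is hit. -/
lemma trick (k : ℕ) (a b : P) :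
    a * A.Sq k b + A.chi k a * b ∈
      Submodule.span (ZMod 2) {q | ∃ i, 0 < i ∧ ∃ u, q = A.Sq i u} := by
  have hT : ∑ x ∈ Finset.HasAntidiagonal.antidiagonal k, A.Sq x.1 (A.chi x.2 a * b) = a * A.Sq k b := by
    calc ∑ x ∈ Finset.HasAntidiagonal.antidiagonal k, A.Sq x.1 (A.chi x.2 a * b)
        = ∑ x ∈ Finset.HasAntidiagonal.antidiagonal k, ∑ y ∈ Finset.HasAntidiagonal.antidiagonal x.1,
            A.Sq y.1 (A.chi x.2 a) * A.Sq y.2 b :=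
          Finset.sum_congr rfl fun x _ => A.cartan x.1 _ b
      _ = ∑ x ∈ Finset.HasAntidiagonal.antidiagonal k, ∑ y ∈ Finset.HasAntidiagonal.antidiagonal x.1,
            A.Sq y.1 (A.chi y.2 a) * A.Sq x.2 b :=
          sh1 k (fun p j q => A.Sq p (A.chi j a) * A.Sq q b)
      _ = ∑ x ∈ Finset.HasAntidiagonal.antidiagonal k, (if x.1 = 0 then a else 0) * A.Sq x.2 b := by
          refine Finset.sum_congr rfl fun x _ => ?_
          rw [← Finset.sum_mul, A.sum_sq_chi]
      _ = a * A.Sq k b := by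
          rw [Finset.sum_eq_single (0, k)]
          · simp
          · rintro ⟨x1, x2⟩ hx hne
            simp only [Finset.HasAntidiagonal.mem_antidiagonal] at hx
            have h1 : x1 ≠ 0 := by
              rintro rfl
              exact hne (Prod.ext rfl (by omega))
            simp [h1]
          · intro hmem; exact absurd (by simp [Finset.HasAntidiagonal.mem_antidiagonal]) hmem
  cases k with
  | zero =>
    rw [A.sq_zero, chi_zero, CharTwo.add_self_eq_zero]
    exact Submodule.zero_mem _
  | succ m =>
    rw [Finset.Nat.sum_antidiagonal_succ, A.sq_zero] at hT
    rw [← hT, add_right_comm, CharTwo.add_self_eq_zero, zero_add]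
    exact Submodule.sum_mem _ fun x _ =>
      Submodule.subset_span ⟨x.1 + 1, Nat.succ_pos _, _, rfl⟩


/-- Cartan formula for χ. -/
lemma chi_mul : ∀ k (a b : P), A.chi k (a * b) =
    ∑ x ∈ Finset.HasAntidiagonal.antidiagonal k, A.chi x.1 a * A.chi x.2 b := by
  intro k
  induction k using Nat.strong_induction_on with
  | _ k ih =>
    intro a b
    cases k with
    | zero => simp
    | succ m =>
      have hG : ∀ x : ℕ × ℕ, x ∈ Finset.HasAntidiagonal.antidiagonal m →
          A.Sq (x.1+1) (A.chi x.2 (a * b)) =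
          ∑ y ∈ Finset.HasAntidiagonal.antidiagonal x.2, ∑ z ∈ Finset.HasAntidiagonal.antidiagonal (x.1+1),
            A.Sq z.1 (A.chi y.1 a) * A.Sq z.2 (A.chi y.2 b) := by
        intro x hx
        simp only [Finset.HasAntidiagonal.mem_antidiagonal] at hx
        rw [ih x.2 (by omega) a b, map_sum]
        exact Finset.sum_congr rfl fun y _ => A.cartan (x.1+1) _ _
      have hU : ∑ x ∈ Finset.HasAntidiagonal.antidiagonal (m+1),
          ∑ y ∈ Finset.HasAntidiagonal.antidiagonal x.2, ∑ z ∈ Finset.HasAntidiagonal.antidiagonal x.1,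
            A.Sq z.1 (A.chi y.1 a) * A.Sq z.2 (A.chi y.2 b) = 0 := by
        rw [sh2 (m+1) (fun s p t q => A.Sq s (A.chi p a) * A.Sq t (A.chi q b))]
        refine Finset.sum_eq_zero fun x hx => ?_
        simp only [Finset.HasAntidiagonal.mem_antidiagonal] at hx
        rw [← Finset.sum_mul_sum, A.sum_sq_chi, A.sum_sq_chi]
        rcases Nat.eq_zero_or_pos x.1 with h1 | h1
        · rw [if_neg (show ¬ x.2 = 0 by omega), mul_zero]
        · rw [if_neg (show ¬ x.1 = 0 by omega), zero_mul]
      rw [Finset.Nat.sum_antidiagonal_succ] at hU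
      have hfst : ∑ y ∈ Finset.HasAntidiagonal.antidiagonal (m+1),
          ∑ z ∈ Finset.HasAntidiagonal.antidiagonal (0:ℕ),
            A.Sq z.1 (A.chi y.1 a) * A.Sq z.2 (A.chi y.2 b)
          = ∑ y ∈ Finset.HasAntidiagonal.antidiagonal (m+1), A.chi y.1 a * A.chi y.2 b := by
        refine Finset.sum_congr rfl fun y _ => ?_
        simp [A.sq_zero]
      rw [hfst] at hU
      have hrest : ∑ x ∈ Finset.HasAntidiagonal.antidiagonal m,
          ∑ y ∈ Finset.HasAntidiagonal.antidiagonal x.2, ∑ z ∈ Finset.HasAntidiagonal.antidiagonal (x.1+1),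
            A.Sq z.1 (A.chi y.1 a) * A.Sq z.2 (A.chi y.2 b)
          = A.chi (m+1) (a * b) := by
        rw [chi_succ]
        exact (Finset.sum_congr rfl hG).symm
      rw [hrest] at hU
      calc A.chi (m+1) (a*b)
          = ∑ y ∈ Finset.HasAntidiagonal.antidiagonal (m+1), A.chi y.1 a * A.chi y.2 b +
            (∑ y ∈ Finset.HasAntidiagonal.antidiagonal (m+1), A.chi y.1 a * A.chi y.2 b +
              A.chi (m+1) (a*b)) := by
            rw [← add_assoc, CharTwo.add_self_eq_zero, zero_add]
        _ = ∑ y ∈ Finset.HasAntidiagonal.antidiagonal (m+1), A.chi y.1 a * A.chi y.2 b := by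
            rw [hU, add_zero]


lemma chi_one : ∀ k, 0 < k → A.chi k 1 = 0 := by
  intro k
  induction k using Nat.strong_induction_on with
  | _ k ih =>
    cases k with
    | zero => intro h; omega
    | succ m =>
      intro _
      rw [chi_succ]
      refine Finset.sum_eq_zero fun x hx => ?_
      simp only [Finset.HasAntidiagonal.mem_antidiagonal] at hx
      rcases Nat.eq_zero_or_pos x.2 with h2 | h2
      · rw [h2, chi_zero, A.sq_one_pos _ (Nat.succ_pos _)]
      · rw [ih x.2 (by omega) h2, map_zero]

/-- Squares: `Sq^k(v²) = (Sq^{k/2} v)²` for even `k`, `0` for odd `k`. -/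
lemma sq_sq (k : ℕ) (v : P) :
    A.Sq k (v * v) = if Even k then A.Sq (k/2) v * A.Sq (k/2) v else 0 := by
  rw [A.cartan]
  by_cases hk : Even k
  · rw [if_pos hk]
    obtain ⟨t, ht⟩ := hk
    have hmem : ((t, t) : ℕ × ℕ) ∈ Finset.HasAntidiagonal.antidiagonal k := by
      simp [Finset.HasAntidiagonal.mem_antidiagonal]; omega
    rw [← Finset.add_sum_erase _ _ hmem]
    have hz : ∑ x ∈ (Finset.HasAntidiagonal.antidiagonal k).erase (t, t),
        A.Sq x.1 v * A.Sq x.2 v = 0 := by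
      refine Finset.sum_involution (fun z _ => z.swap) ?_ ?_ ?_ ?_
      · intro z _
        rw [mul_comm]
        exact CharTwo.add_self_eq_zero _
      · intro z hz _
        simp only [Finset.mem_erase, Finset.HasAntidiagonal.mem_antidiagonal] at hz
        intro heq
        apply hz.1
        have h1 : z.2 = z.1 := congrArg Prod.fst heq
        have : z.1 = t := by omega
        exact Prod.ext this (by omega)
      · intro z hz
        simp only [Finset.mem_erase, Finset.HasAntidiagonal.mem_antidiagonal] at hz ⊢
        refine ⟨fun hs => hz.1 ?_, by
          simp only [Prod.fst_swap, Prod.snd_swap]; omega⟩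
        have h1 : z.2 = t := congrArg Prod.fst hs
        exact Prod.ext (by omega) (by omega)
      · intro z _; rfl
    rw [hz, add_zero]
    have : t = k / 2 := by omega
    rw [this]
  · rw [if_neg hk]
    refine Finset.sum_involution (fun z _ => z.swap) ?_ ?_ ?_ ?_
    · intro z _
      rw [mul_comm]
      exact CharTwo.add_self_eq_zero _
    · intro z hz _
      simp only [Finset.HasAntidiagonal.mem_antidiagonal] at hz
      intro heq
      have h1 : z.2 = z.1 := congrArg Prod.fst heq
      rw [Nat.even_iff] at hk
      omega
    · intro z hz
      simp only [Finset.HasAntidiagonal.mem_antidiagonal, Prod.fst_swap, Prod.snd_swap] at hz ⊢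
      omega
    · intro z _; rfl

/-- Action on 2-power powers of a variable. -/
lemma sq_pow_two (i : Fin n) : ∀ t p : ℕ,
    A.Sq p (X i ^ 2^t) =
      if p = 0 then X i ^ 2^t else if p = 2^t then X i ^ 2^(t+1) else 0 := by
  intro t
  induction t with
  | zero =>
    intro p
    simp only [pow_zero, pow_one]
    match p with
    | 0 => rw [if_pos rfl]; exact A.sq_zero _
    | 1 => rw [if_neg one_ne_zero, if_pos rfl]; simpa using A.sq_one_var i
    | (q+2) =>
      rw [if_neg (by omega), if_neg (by omega)]
      exact A.sq_var_eq_zero i (q+2) (by omega)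
  | succ t ih =>
    intro p
    have hsq : (X i ^ 2^(t+1) : P) = (X i ^ 2^t) * (X i ^ 2^t) := by
      rw [← pow_add]; ring_nf
    rw [hsq, A.sq_sq]
    by_cases hp : Even p
    · rw [if_pos hp]
      obtain ⟨u, hu⟩ := hp
      have hp2 : p / 2 = u := by omega
      rw [hp2, ih u]
      rcases Nat.eq_zero_or_pos u with h0 | h0
      · subst h0
        rw [if_pos (show p = 0 by omega)]
        simp [← hsq]
      · rw [if_neg (show ¬ u = 0 by omega)]
        by_cases h2 : u = 2^t
        · rw [if_pos h2, if_neg (show ¬ p = 0 by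
              have := Nat.pow_pos (n := t) (show 0 < 2 by norm_num); omega),
            if_pos (show p = 2^(t+1) by subst h2; rw [pow_succ]; omega)]
          rw [← pow_add]; ring_nf
        · rw [if_neg h2, mul_zero, if_neg (show ¬ p = 0 by omega),
            if_neg (show ¬ p = 2^(t+1) by
              intro hc
              apply h2
              rw [pow_succ] at hc
              omega)]
    · rw [if_neg hp]
      have h0 : ¬ p = 0 := by rintro rfl; exact hp (by simp)
      have h1 : ¬ p = 2^(t+1) := by
        rintro rfl; exact hp ⟨2^t, by rw [pow_succ]; ring⟩
      rw [if_neg h0, if_neg h1]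


lemma one_le_two_pow' (t : ℕ) : 1 ≤ 2^t := Nat.one_le_two_pow

/-- χ on a variable: `χ^{2^t-1}(x) = x^{2^t}` and `χ^k(x) = 0` otherwise. -/
lemma chi_var (i : Fin n) : ∀ p : ℕ,
    (∀ t, p = 2^t - 1 → A.chi p (X i) = X i ^ 2^t) ∧
    ((∀ t : ℕ, p ≠ 2^t - 1) → A.chi p (X i) = 0) := by
  intro p
  induction p using Nat.strong_induction_on with
  | _ p ih =>
    cases p with
    | zero =>
      constructor
      · intro t ht
        have h1 : (2:ℕ)^t = 1 := by have := one_le_two_pow' t; omega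
        rw [chi_zero, h1, pow_one]
      · intro hbad
        exact absurd (show (0:ℕ) = 2^0 - 1 by norm_num) (hbad 0)
    | succ m =>
      constructor
      · -- p = 2^T - 1
        intro T hT
        have hT1 : 1 ≤ T := by
          by_contra hc
          have : T = 0 := by omega
          subst this; simp at hT
        have hTm : (2:ℕ)^T = 2 * 2^(T-1) := by
          conv_lhs => rw [show T = (T-1)+1 by omega]
          rw [pow_succ]; ring
        have h2T : 1 ≤ (2:ℕ)^(T-1) := one_le_two_pow' _
        rw [chi_succ]
        rw [Finset.sum_eq_single (2^(T-1) - 1, 2^(T-1) - 1)]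
        · have hx2 : (2:ℕ)^(T-1) - 1 = 2^(T-1) - 1 := rfl
          rw [(ih (2^(T-1)-1) (by omega)).1 (T-1) rfl]
          rw [show (2:ℕ)^(T-1) - 1 + 1 = 2^(T-1) by omega]
          rw [A.sq_pow_two i (T-1) (2^(T-1))]
          rw [if_neg (show ¬ (2:ℕ)^(T-1) = 0 by omega), if_pos rfl]
          rw [show T - 1 + 1 = T by omega]
        · rintro ⟨x1, x2⟩ hx hne
          simp only [Finset.HasAntidiagonal.mem_antidiagonal] at hx
          by_cases hgood : ∃ t, x2 = 2^t - 1
          · obtain ⟨t, ht'⟩ := hgood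
            have h2t : 1 ≤ (2:ℕ)^t := one_le_two_pow' t
            rw [(ih x2 (by omega)).1 t ht', A.sq_pow_two i t (x1+1)]
            rw [if_neg (show ¬ x1 + 1 = 0 by omega)]
            rw [if_neg (show ¬ x1 + 1 = 2^t by
              intro hc
              apply hne
              have hmt : m = 2^t - 1 + (2^t - 1) := by omega
              have h2 : (2:ℕ)^(t+1) = 2^T := by
                rw [pow_succ]
                have := one_le_two_pow' T
                omega
              have : t + 1 = T := Nat.pow_right_injective (le_refl 2) h2
              have hx1 : x1 = 2^(T-1) - 1 := by omega
              have hx2 : x2 = 2^(T-1) - 1 := by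
                rw [ht', show t = T - 1 by omega]
              rw [hx1, hx2])]
          · push_neg at hgood
            rw [(ih x2 (by omega)).2 hgood, map_zero]
        · intro hmem
          exfalso
          exact hmem (by simp only [Finset.HasAntidiagonal.mem_antidiagonal]; omega)
      · -- p is not of the form 2^T - 1
        intro hbad
        rw [chi_succ]
        refine Finset.sum_eq_zero fun x hx => ?_
        simp only [Finset.HasAntidiagonal.mem_antidiagonal] at hx
        by_cases hgood : ∃ t, x.2 = 2^t - 1
        · obtain ⟨t, ht'⟩ := hgood
          have h2t : 1 ≤ (2:ℕ)^t := one_le_two_pow' t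
          rw [(ih x.2 (by omega)).1 t ht', A.sq_pow_two i t (x.1+1)]
          rw [if_neg (show ¬ x.1 + 1 = 0 by omega)]
          rw [if_neg (show ¬ x.1 + 1 = 2^t by
            intro hc
            apply hbad (t+1)
            rw [pow_succ]
            omega)]
        · push_neg at hgood
          rw [(ih x.2 (by omega)).2 hgood, map_zero]


/-- χ kills a squarefree monomial in degrees that are not sums of numbers `2^t - 1`. -/
lemma chi_prod (T : Finset (Fin n)) : ∀ k : ℕ,
    (∀ a : Fin n → ℕ, k ≠ ∑ i ∈ T, (2^(a i) - 1)) →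
    A.chi k (∏ i ∈ T, X i) = 0 := by
  classical
  induction T using Finset.induction_on with
  | empty =>
    intro k hk
    rw [Finset.prod_empty]
    refine A.chi_one k ?_
    have := hk (fun _ => 0)
    simp only [Finset.sum_empty] at this
    omega
  | @insert j T' hj ih =>
    intro k hk
    rw [Finset.prod_insert hj, A.chi_mul]
    refine Finset.sum_eq_zero fun x hx => ?_
    simp only [Finset.HasAntidiagonal.mem_antidiagonal] at hx
    by_cases hgood : ∃ t, x.1 = 2^t - 1
    · obtain ⟨t, ht⟩ := hgood
      have h2 : A.chi x.2 (∏ i ∈ T', X i) = 0 := by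
        refine ih x.2 fun a heq => ?_
        apply hk (Function.update a j t)
        rw [Finset.sum_insert hj, Function.update_self]
        have hrest : ∑ i ∈ T', (2 ^ Function.update a j t i - 1) =
            ∑ i ∈ T', (2 ^ a i - 1) := by
          refine Finset.sum_congr rfl fun i hi => ?_
          rw [Function.update_of_ne (by rintro rfl; exact hj hi)]
        rw [hrest, ← heq, ← ht, hx]
      rw [h2, mul_zero]
    · push_neg at hgood
      rw [(A.chi_var j x.1).2 hgood, zero_mul]

/-- Top square on powers of a variable. -/
lemma sq_pow_var (i : Fin n) : ∀ c : ℕ,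
    (A.Sq c (X i ^ c) = X i ^ c * X i ^ c) ∧
    (∀ k, c < k → A.Sq k (X i ^ c) = 0) := by
  intro c
  have cartan_var : ∀ (w : P) (m : ℕ), A.Sq (m+1) (X i * w) =
      X i * A.Sq (m+1) w + X i ^ 2 * A.Sq m w := by
    intro w m
    rw [A.cartan, Finset.Nat.sum_antidiagonal_succ, A.sq_zero]
    congr 1
    rw [Finset.sum_eq_single (0, m)]
    · rw [A.sq_one_var]
    · rintro ⟨x1, x2⟩ hx hne
      simp only [Finset.HasAntidiagonal.mem_antidiagonal] at hx
      have : ¬ x1 = 0 := by rintro rfl; exact hne (Prod.ext rfl (by omega))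
      rw [A.sq_var_eq_zero i (x1+1) (by omega), zero_mul]
    · intro hmem
      exact absurd (by simp only [Finset.HasAntidiagonal.mem_antidiagonal]; omega) hmem
  induction c with
  | zero =>
    constructor
    · simpa [pow_zero] using A.sq_zero (1 : P)
    · intro k hk
      simpa using A.sq_one_pos k hk
  | succ c ihc =>
    have key : ∀ k, c ≤ k → A.Sq (k+1) (X i ^ (c+1)) =
        X i ^ 2 * A.Sq k (X i ^ c) := by
      intro k hck
      rw [pow_succ, mul_comm (X i ^ c) (X i), cartan_var, ihc.2 (k+1) (by omega),
        mul_zero, zero_add]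
    constructor
    · rw [key c le_rfl, ihc.1]; ring
    · intro k hk
      obtain ⟨k', rfl⟩ : ∃ k', k = k' + 1 := ⟨k - 1, by omega⟩
      rw [key k' (by omega), ihc.2 k' (by omega), mul_zero]


/-- Top square on monomials: `Sq^{deg m}(m) = m²` and `Sq^k(m) = 0` for `k > deg m`. -/
lemma sq_top_prod (c : Fin n → ℕ) (s : Finset (Fin n)) :
    (A.Sq (∑ i ∈ s, c i) (∏ i ∈ s, X i ^ c i) =
      (∏ i ∈ s, X i ^ c i) * (∏ i ∈ s, X i ^ c i)) ∧
    (∀ k, (∑ i ∈ s, c i) < k → A.Sq k (∏ i ∈ s, X i ^ c i) = 0) := by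
  classical
  induction s using Finset.induction_on with
  | empty =>
    constructor
    · simpa using A.sq_zero (1 : P)
    · intro k hk
      simpa using A.sq_one_pos k (by simpa using hk)
  | @insert j s hj ih =>
    rw [Finset.prod_insert hj, Finset.sum_insert hj]
    constructor
    · rw [A.cartan, Finset.sum_eq_single (c j, ∑ i ∈ s, c i)]
      · rw [(A.sq_pow_var j (c j)).1, ih.1]; ring
      · rintro ⟨x1, x2⟩ hx hne
        simp only [Finset.HasAntidiagonal.mem_antidiagonal] at hx
        rcases Nat.lt_or_ge x1 (c j) with h1 | h1
        · rw [ih.2 x2 (by omega), mul_zero]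
        · rcases Nat.eq_or_lt_of_le h1 with h2 | h2
          · exfalso; exact hne (Prod.ext h2.symm (by omega))
          · rw [(A.sq_pow_var j (c j)).2 x1 h2, zero_mul]
      · intro hmem
        exact absurd (by simp only [Finset.HasAntidiagonal.mem_antidiagonal]) hmem
    · intro k hk
      rw [A.cartan]
      refine Finset.sum_eq_zero fun x hx => ?_
      simp only [Finset.HasAntidiagonal.mem_antidiagonal] at hx
      rcases Nat.lt_or_ge (c j) x.1 with h1 | h1
      · rw [(A.sq_pow_var j (c j)).2 x.1 h1, zero_mul]
      · rw [ih.2 x.2 (by omega), mul_zero]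

end SteenrodAction

section Alpha

lemma alpha_two_mul (m : ℕ) :
    (Nat.digits 2 (2*m)).sum = (Nat.digits 2 m).sum := by
  rcases Nat.eq_zero_or_pos m with rfl | hm
  · simp
  · rw [Nat.digits_def' one_lt_two (by omega), List.sum_cons,
      Nat.mul_mod_right, Nat.mul_div_cancel_left _ (by norm_num), zero_add]

lemma alpha_two_mul_add_one (m : ℕ) :
    (Nat.digits 2 (2*m+1)).sum = (Nat.digits 2 m).sum + 1 := by
  rw [Nat.digits_def' one_lt_two (by omega), List.sum_cons]
  have h1 : (2*m+1) % 2 = 1 := by omega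
  have h2 : (2*m+1) / 2 = m := by omega
  rw [h1, h2]; omega

lemma alpha_succ (a : ℕ) :
    (Nat.digits 2 (a+1)).sum ≤ (Nat.digits 2 a).sum + 1 := by
  induction a using Nat.strong_induction_on with
  | _ a ih =>
    rcases Nat.even_or_odd a with ⟨m, hm⟩ | ⟨m, hm⟩
    · subst hm
      rw [show m + m + 1 = 2*m+1 by ring, alpha_two_mul_add_one,
        show m + m = 2*m by ring, alpha_two_mul]
    · subst hm
      rw [show 2*m+1+1 = 2*(m+1) by ring, alpha_two_mul, alpha_two_mul_add_one]
      have := ih m (by omega)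
      omega

lemma alpha_add_pow (e : ℕ) : ∀ a : ℕ,
    (Nat.digits 2 (a + 2^e)).sum ≤ (Nat.digits 2 a).sum + 1 := by
  induction e with
  | zero => intro a; simpa using alpha_succ a
  | succ e ih =>
    intro a
    have h2 : (2:ℕ)^(e+1) = 2 * 2^e := by rw [pow_succ]; ring
    rcases Nat.even_or_odd a with ⟨m, hm⟩ | ⟨m, hm⟩
    · subst hm
      rw [show m + m + 2^(e+1) = 2*(m + 2^e) by omega, alpha_two_mul,
        show m + m = 2*m by ring, alpha_two_mul]
      exact ih m
    · subst hm
      rw [show 2*m+1 + 2^(e+1) = 2*(m + 2^e) + 1 by omega,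
        alpha_two_mul_add_one, alpha_two_mul_add_one]
      have := ih m
      omega

lemma alpha_sum_pow {ι : Type*} (T : Finset ι) (e : ι → ℕ) :
    (Nat.digits 2 (∑ i ∈ T, 2^(e i))).sum ≤ T.card := by
  classical
  induction T using Finset.induction_on with
  | empty => simp
  | @insert j T' hj ih =>
    rw [Finset.sum_insert hj, Finset.card_insert_of_notMem hj, add_comm ((2:ℕ)^(e j))]
    calc (Nat.digits 2 ((∑ i ∈ T', 2^(e i)) + 2^(e j))).sum
        ≤ (Nat.digits 2 (∑ i ∈ T', 2^(e i))).sum + 1 := alpha_add_pow _ _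
      _ ≤ T'.card + 1 := by omega

end Alpha


/-- Wood's theorem / Peterson conjecture: a monomial of total degree d
with exactly r odd exponents is hit whenever α(d + r) > r, where α counts binary 1s. -/
theorem stmt11 (n : ℕ) (A : SteenrodAction n) (d : Fin n → ℕ)
    (h : (Nat.digits 2 ((∑ i, d i) +
            (Finset.univ.filter fun i => Odd (d i)).card)).sum >
          (Finset.univ.filter fun i => Odd (d i)).card) :
    A.IsHit (∏ i, X i ^ d i) := by

  classical
  set T := Finset.univ.filter fun i => Odd (d i) with hT
  set r := T.card with hr
  set c : Fin n → ℕ := fun i => d i / 2 with hc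
  set s := ∑ i, c i with hs
  set u : MvPolynomial (Fin n) (ZMod 2) := ∏ i ∈ T, X i with hu
  set v : MvPolynomial (Fin n) (ZMod 2) := ∏ i : Fin n, X i ^ c i with hv
  -- degree decomposition
  have hd : (∑ i, d i) = 2*s + r := by
    have h1 : ∀ i, d i = 2 * c i + (if Odd (d i) then 1 else 0) := by
      intro i
      by_cases hodd : Odd (d i)
      · rw [if_pos hodd]
        rw [Nat.odd_iff] at hodd
        simp only [hc]
        omega
      · rw [if_neg hodd]
        rw [Nat.odd_iff] at hodd
        simp only [hc]
        omega
    calc (∑ i, d i) = ∑ i, (2 * c i + (if Odd (d i) then 1 else 0)) :=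
          Finset.sum_congr rfl fun i _ => h1 i
      _ = (∑ i, 2 * c i) + ∑ i, (if Odd (d i) then 1 else 0) :=
          Finset.sum_add_distrib
      _ = 2*s + r := by
        rw [← Finset.mul_sum, hs, hr, hT]
        congr 1
        simp [Finset.sum_boole]
  -- factorization of the monomial
  have hfac : (∏ i, X i ^ d i) = u * (v * v) := by
    have hu' : u = ∏ i, (if Odd (d i) then X i else 1) := by
      rw [hu, hT, Finset.prod_filter]
    have hv' : v * v = ∏ i, X i ^ (2 * c i) := by
      rw [hv, ← Finset.prod_mul_distrib]
      exact Finset.prod_congr rfl fun i _ => by rw [← pow_add]; congr 1; ring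
    rw [hu', hv', ← Finset.prod_mul_distrib]
    refine (Finset.prod_congr rfl fun i _ => ?_).symm
    by_cases hodd : Odd (d i)
    · rw [if_pos hodd, ← pow_succ']
      congr 1
      rw [Nat.odd_iff] at hodd
      simp only [hc]
      omega
    · rw [if_neg hodd, one_mul]
      congr 1
      rw [Nat.odd_iff] at hodd
      simp only [hc]
      omega
  -- top square
  have hsq : A.Sq s v = v * v := (A.sq_top_prod c Finset.univ).1
  -- χ of u vanishes in degree s
  have hchi : A.chi s u = 0 := by
    refine A.chi_prod T s fun a heq => ?_
    have hsum : s + r = ∑ i ∈ T, 2^(a i) := by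
      rw [heq, hr, Finset.card_eq_sum_ones, ← Finset.sum_add_distrib]
      refine Finset.sum_congr rfl fun i _ => ?_
      have : 1 ≤ 2^(a i) := Nat.one_le_two_pow
      omega
    have hdr : (∑ i, d i) + r = ∑ i ∈ T, 2^(a i + 1) := by
      have : (∑ i, d i) + r = 2 * (s + r) := by omega
      rw [this, hsum, Finset.mul_sum]
      exact Finset.sum_congr rfl fun i _ => by rw [pow_succ]; ring
    have halpha := alpha_sum_pow T (fun i => a i + 1)
    rw [← hdr] at halpha
    omega
  -- the χ-trick finishes the proof
  have htrick := A.trick s u v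
  rw [hsq, hchi, zero_mul, add_zero] at htrick
  rw [hfac]
  exact htrick
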